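/- The unique v ∈ V with v_x + 2v² = w (for w = w_0 + ∑_{k≥2} w_k x^k) satisfies v_1 = (1/3)w_0, v_3 = -(2/45)w_0² + (1/5)w_2, v_4 = (1/6)w_3, v_5 = (8/945)w_0³ - (4/105)w_0 w_2 + (1/7)w_4, and v_6 = -(1/36)w_0 w_3 + (1/8)w_5. -/

import Mathlib

/-- Formal derivative on Laurent series: `(D q).coeff k = (k+1) * q.coeff (k+1)`. -/
noncomputable def D (q : LaurentSeries ℂ) : LaurentSeries ℂ :=
  HahnSeries.ofSuppBddBelow (fun k => ((k + 1 : ℤ) : ℂ) * q.coeff (k + 1))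
    (HahnSeries.forallLTEqZero_supp_BddBelow _ (q.order - 1) (fun m hm => by
      have h : m + 1 < q.order := by omega
      simp [HahnSeries.coeff_eq_zero_of_lt_order h]))

@[simp] lemma D_coeff (q : LaurentSeries ℂ) (k : ℤ) :
    (D q).coeff k = ((k + 1 : ℤ) : ℂ) * q.coeff (k + 1) := rfl

/-- The residue: coefficient of `x⁻¹`. -/
noncomputable def res (q : LaurentSeries ℂ) : ℂ := q.coeff (-1)

/-- `V`: series of the form `(1/2)x⁻¹ + v₁x + ∑_{k≥3} vₖ xᵏ`. -/
def memV (v : LaurentSeries ℂ) : Prop :=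
  v.coeff (-1) = 1/2 ∧ v.coeff 0 = 0 ∧ v.coeff 2 = 0 ∧ ∀ k < (-1 : ℤ), v.coeff k = 0

/-- `W`: series of the form `w₀ + ∑_{k≥2} wₖ xᵏ`. -/
def memW (w : LaurentSeries ℂ) : Prop :=
  w.coeff 1 = 0 ∧ ∀ k < (0 : ℤ), w.coeff k = 0

/-- `U`: series of the form `x⁻² + u₀ + ∑_{k≥2} uₖ xᵏ`. -/
def memU (u : LaurentSeries ℂ) : Prop :=
  u.coeff (-2) = 1 ∧ u.coeff (-1) = 0 ∧ u.coeff 1 = 0 ∧ ∀ k < (-2 : ℤ), u.coeff k = 0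

/-- The Miura transformation `M(v) = v_x + 2v²`. -/
noncomputable def M (v : LaurentSeries ℂ) : LaurentSeries ℂ := D v + 2 * v ^ 2

/-- The composition `M ∘ R` of Miura with the reflection `R(v) = -v`:
`(M∘R)(v) = -v_x + 2v²`. -/
noncomputable def MR (v : LaurentSeries ℂ) : LaurentSeries ℂ := -(D v) + 2 * v ^ 2

lemma mul_coeff_bdd (a b : LaurentSeries ℂ)
    (ha : ∀ j < (-1:ℤ), a.coeff j = 0) (hb : ∀ j < (-1:ℤ), b.coeff j = 0) (k : ℤ) :
    (a * b).coeff k = ∑ i ∈ Finset.Icc (-1) (k+1), a.coeff i * b.coeff (k - i) := by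
  rw [HahnSeries.coeff_mul]
  rw [show (∑ i ∈ Finset.Icc (-1) (k+1), a.coeff i * b.coeff (k - i)) =
      ∑ ij ∈ (Finset.Icc (-1:ℤ) (k+1)).map ⟨fun i => (i, k - i), Function.LeftInverse.injective (g := Prod.fst) (fun _ => rfl)⟩, a.coeff ij.1 * b.coeff ij.2 from by
    rw [Finset.sum_map]; rfl]
  apply Finset.sum_subset
  · intro ij hij
    rw [Finset.mem_addAntidiagonal] at hij
    obtain ⟨h1, h2, h3⟩ := hij
    simp only [Finset.mem_map, Finset.mem_Icc, Function.Embedding.coeFn_mk]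
    refine ⟨ij.1, ⟨?_, ?_⟩, ?_⟩
    · by_contra hc; exact h1 (ha _ (by omega))
    · have : -1 ≤ ij.2 := by by_contra hc; exact h2 (hb _ (by omega))
      omega
    · ext
      · simp
      · simp; omega
  · intro ij hijT hij
    rw [Finset.mem_addAntidiagonal] at hij
    simp only [Finset.mem_map, Finset.mem_Icc, Function.Embedding.coeFn_mk] at hijT
    obtain ⟨i, _, rfl⟩ := hijT
    simp only [HahnSeries.mem_support, ne_eq, not_and, not_not] at hij
    by_cases h1 : a.coeff i = 0
    · simp [h1]
    · by_cases h2 : b.coeff (k - i) = 0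
      · simp [h2]
      · exact absurd ((hij h1 h2)) (not_not_intro (by omega))

/-- First coefficients of the solution `v ∈ V` of `v_x + 2v² = w`, `w ∈ W`. -/
theorem stmt11 (w v : LaurentSeries ℂ) (hw : memW w) (hv : memV v) (h : M v = w) :
    v.coeff 1 = (1/3) * w.coeff 0 ∧
    v.coeff 3 = -(2/45) * (w.coeff 0) ^ 2 + (1/5) * w.coeff 2 ∧
    v.coeff 4 = (1/6) * w.coeff 3 ∧
    v.coeff 5 = (8/945) * (w.coeff 0) ^ 3 - (4/105) * w.coeff 0 * w.coeff 2
      + (1/7) * w.coeff 4 ∧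
    v.coeff 6 = -(1/36) * w.coeff 0 * w.coeff 3 + (1/8) * w.coeff 5 := by
  obtain ⟨hvm1, hv0, hv2, hvlow⟩ := hv
  obtain ⟨hw1, hwlow⟩ := hw
  have h2 : D v + (v * v + v * v) = w := by
    rw [← h]; unfold M; ring
  have key : ∀ k : ℤ, ((k + 1 : ℤ) : ℂ) * v.coeff (k + 1)
      + ((∑ i ∈ Finset.Icc (-1) (k+1), v.coeff i * v.coeff (k - i))
        + (∑ i ∈ Finset.Icc (-1) (k+1), v.coeff i * v.coeff (k - i))) = w.coeff k := by
    intro k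
    have := congrArg (fun q : LaurentSeries ℂ => q.coeff k) h2
    simpa only [HahnSeries.coeff_add, D_coeff, mul_coeff_bdd v v hvlow hvlow k] using this
  have e0 := key 0
  have e2 := key 2
  have e3 := key 3
  have e4 := key 4
  have e5 := key 5
  rw [show Finset.Icc (-1:ℤ) (0+1) = {-1,0,1} from by decide] at e0
  rw [show Finset.Icc (-1:ℤ) (2+1) = {-1,0,1,2,3} from by decide] at e2
  rw [show Finset.Icc (-1:ℤ) (3+1) = {-1,0,1,2,3,4} from by decide] at e3
  rw [show Finset.Icc (-1:ℤ) (4+1) = {-1,0,1,2,3,4,5} from by decide] at e4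
  rw [show Finset.Icc (-1:ℤ) (5+1) = {-1,0,1,2,3,4,5,6} from by decide] at e5
  norm_num [Finset.sum_insert, Finset.mem_insert, hvm1, hv0, hv2] at e0 e2 e3 e4 e5
  have hv1 : v.coeff 1 = (1/3) * w.coeff 0 := by linear_combination (1/3) * e0
  have hv3 : v.coeff 3 = -(2/45) * (w.coeff 0) ^ 2 + (1/5) * w.coeff 2 := by
    rw [hv1] at e2; linear_combination (1/5) * e2
  have hv4 : v.coeff 4 = (1/6) * w.coeff 3 := by linear_combination (1/6) * e3
  refine ⟨hv1, hv3, hv4, ?_, ?_⟩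
  · rw [hv1, hv3] at e4; linear_combination (1/7) * e4
  · rw [hv1, hv4] at e5; linear_combination (1/8) * e5
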